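/- arXiv:1008.2108 — 8 statements merged into one kernel-verified Lean document; each statement's English description precedes it below -/
import Mathlib

section
/- Let A be an action set with partition {A^r, A^l, A^bi}. For all closed BCCSP processes p, q over A: p ≲_CC q if and only if the inequation p ≤ q is derivable from the axioms B1–B4 (each used as two inequations) together with the axiom schemas (S^r_p): x ≤ x + a.y for each a ∈ A^r, and (S^l_p): x + a.y ≤ x for each a ∈ A^l. -/
inductive Proc (A : Type) : Type
  | nil : Proc A
  | pre : A → Proc A → Proc A
  | add : Proc A → Proc A → Proc A

inductive Step {A : Type} : Proc A → A → Proc A → Prop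
  | pre (a : A) (p : Proc A) : Step (.pre a p) a p
  | addL {p : Proc A} {a : A} {p' : Proc A} (q : Proc A) :
      Step p a p' → Step (.add p q) a p'
  | addR {q : Proc A} {a : A} {q' : Proc A} (p : Proc A) :
      Step q a q' → Step (.add p q) a q'

/-- `initials p` is the set `I(p)` of actions that `p` can immediately perform. -/
def initials {A : Type} (p : Proc A) : Set A := {a | ∃ p', Step p a p'}

/-- `{Ar, Al, Abi}` is a partition of the action set `A` (cells may be empty). -/
def IsPartition {A : Type} (Ar Al Abi : Set A) : Prop :=
  (Ar ∪ Al ∪ Abi = Set.univ) ∧ Disjoint Ar Al ∧ Disjoint Ar Abi ∧ Disjoint Al Abi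

/-- Covariant-contravariant simulation w.r.t. covariant actions `Ar`,
contravariant actions `Al` and bivariant actions `Abi`. -/
def IsCCSim {A : Type} (Ar Al Abi : Set A) (S : Proc A → Proc A → Prop) : Prop :=
  ∀ p q, S p q →
    (∀ a ∈ Ar ∪ Abi, ∀ p', Step p a p' → ∃ q', Step q a q' ∧ S p' q') ∧
    (∀ a ∈ Al ∪ Abi, ∀ q', Step q a q' → ∃ p', Step p a p' ∧ S p' q')

/-- The covariant-contravariant simulation preorder `p ≲_CC q`. -/
def ccLe {A : Type} (Ar Al Abi : Set A) (p q : Proc A) : Prop :=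
  ∃ S, IsCCSim Ar Al Abi S ∧ S p q

/-- Covariant-contravariant simulation equivalence `p ≡_CC q`. -/
def ccEq {A : Type} (Ar Al Abi : Set A) (p q : Proc A) : Prop :=
  ccLe Ar Al Abi p q ∧ ccLe Ar Al Abi q p

/-- Conformance simulation. -/
def IsConfSim {A : Type} (R : Proc A → Proc A → Prop) : Prop :=
  ∀ p q, R p q →
    initials p ⊆ initials q ∧
    (∀ a q', Step q a q' → a ∈ initials p → ∃ p', Step p a p' ∧ R p' q')

/-- The conformance simulation preorder `p ≲_CS q`. -/
def csLe {A : Type} (p q : Proc A) : Prop := ∃ R, IsConfSim R ∧ R p q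

/-- Conformance simulation equivalence `p ≡_CS q`. -/
def csEq {A : Type} (p q : Proc A) : Prop := csLe p q ∧ csLe q p

/-- The conformance precongruence `p ⊑_CS q`. -/
def csPre {A : Type} (p q : Proc A) : Prop := csLe p q ∧ initials q ⊆ initials p

/-- Plain simulation. -/
def IsSim {A : Type} (S : Proc A → Proc A → Prop) : Prop :=
  ∀ p q, S p q → ∀ a p', Step p a p' → ∃ q', Step q a q' ∧ S p' q'

/-- The plain simulation preorder `p ≲_S q`. -/
def simLe {A : Type} (p q : Proc A) : Prop := ∃ S, IsSim S ∧ S p q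

/-- Ready simulation. -/
def IsRSim {A : Type} (S : Proc A → Proc A → Prop) : Prop :=
  ∀ p q, S p q → initials p = initials q ∧
    (∀ a p', Step p a p' → ∃ q', Step q a q' ∧ S p' q')

/-- The ready simulation preorder `p ≲_RS q`. -/
def rsLe {A : Type} (p q : Proc A) : Prop := ∃ S, IsRSim S ∧ S p q

/-- Ready conformance simulation: a conformance simulation that additionally
guarantees `I(q) ⊆ I(p)` for all related pairs. -/
def IsRCSim {A : Type} (R : Proc A → Proc A → Prop) : Prop :=
  IsConfSim R ∧ ∀ p q, R p q → initials q ⊆ initials p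

/-- The ready conformance simulation preorder `p ≲_RCS q`. -/
def rcsLe {A : Type} (p q : Proc A) : Prop := ∃ R, IsRCSim R ∧ R p q

/-- Open BCCSP terms (with variables indexed by `ℕ`). -/
inductive Term (A : Type) : Type
  | var : ℕ → Term A
  | nil : Term A
  | pre : A → Term A → Term A
  | add : Term A → Term A → Term A

/-- Closed substitution applied to an open term. -/
def Term.subst {A : Type} (σ : ℕ → Proc A) : Term A → Proc A
  | .var n => σ n
  | .nil => .nil
  | .pre a t => .pre a (t.subst σ)
  | .add s t => .add (s.subst σ) (t.subst σ)

/-- View a closed process as an (open) term. -/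
def Proc.toTerm {A : Type} : Proc A → Term A
  | .nil => .nil
  | .pre a p => .pre a p.toTerm
  | .add p q => .add p.toTerm q.toTerm

/-- Inequational derivability (between closed processes) from a set `E` of
inequations between open terms: the least relation containing all substitution
instances of `E` and closed under reflexivity, transitivity and the congruence
rules for prefixing and `+`. -/
inductive DerivLe {A : Type} (E : Set (Term A × Term A)) : Proc A → Proc A → Prop
  | ax (l r : Term A) (σ : ℕ → Proc A) : (l, r) ∈ E → DerivLe E (l.subst σ) (r.subst σ)
  | refl (p : Proc A) : DerivLe E p p
  | trans {p q r : Proc A} : DerivLe E p q → DerivLe E q r → DerivLe E p r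
  | pre (a : A) {p q : Proc A} : DerivLe E p q → DerivLe E (.pre a p) (.pre a q)
  | add {p q r s : Proc A} : DerivLe E p q → DerivLe E r s → DerivLe E (.add p r) (.add q s)

/-- Equational derivability (between closed processes) from a set `E` of
equations between open terms. -/
inductive DerivEq {A : Type} (E : Set (Term A × Term A)) : Proc A → Proc A → Prop
  | ax (l r : Term A) (σ : ℕ → Proc A) : (l, r) ∈ E → DerivEq E (l.subst σ) (r.subst σ)
  | refl (p : Proc A) : DerivEq E p p
  | symm {p q : Proc A} : DerivEq E p q → DerivEq E q p
  | trans {p q r : Proc A} : DerivEq E p q → DerivEq E q r → DerivEq E p r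
  | pre (a : A) {p q : Proc A} : DerivEq E p q → DerivEq E (.pre a p) (.pre a q)
  | add {p q r s : Proc A} : DerivEq E p q → DerivEq E r s → DerivEq E (.add p r) (.add q s)

/-- Substitution of (possibly open) terms for variables. -/
def Term.substT {A : Type} (σ : ℕ → Term A) : Term A → Term A
  | .var n => σ n
  | .nil => .nil
  | .pre a t => .pre a (t.substT σ)
  | .add s t => .add (s.substT σ) (t.substT σ)

/-- Equational derivability between open terms from a set `E` of equations. -/
inductive TDerivEq {A : Type} (E : Set (Term A × Term A)) : Term A → Term A → Prop
  | ax (l r : Term A) (σ : ℕ → Term A) : (l, r) ∈ E → TDerivEq E (l.substT σ) (r.substT σ)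
  | refl (t : Term A) : TDerivEq E t t
  | symm {s t : Term A} : TDerivEq E s t → TDerivEq E t s
  | trans {s t u : Term A} : TDerivEq E s t → TDerivEq E t u → TDerivEq E s u
  | pre (a : A) {s t : Term A} : TDerivEq E s t → TDerivEq E (.pre a s) (.pre a t)
  | add {s t u v : Term A} : TDerivEq E s t → TDerivEq E u v → TDerivEq E (.add s u) (.add t v)

/-- The bisimulation axioms B1–B4, as equations. -/
def BEqns (A : Type) : Set (Term A × Term A) :=
  { (.add (.var 0) (.var 1), .add (.var 1) (.var 0)),
    (.add (.add (.var 0) (.var 1)) (.var 2), .add (.var 0) (.add (.var 1) (.var 2))),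
    (.add (.var 0) (.var 0), .var 0),
    (.add (.var 0) .nil, .var 0) }

/-- The bisimulation axioms B1–B4, each used as two inequations. -/
def BIneqs (A : Type) : Set (Term A × Term A) := BEqns A ∪ Prod.swap '' BEqns A

/-- The axiomatization of the covariant-contravariant simulation preorder:
B1–B4 (as inequations) together with `(S^r_p): x ≤ x + a.y` for `a ∈ Ar`
and `(S^l_p): x + a.y ≤ x` for `a ∈ Al`. -/
def AxCCPre {A : Type} (Ar Al : Set A) : Set (Term A × Term A) :=
  BIneqs A ∪
  { e | ∃ a ∈ Ar, e = (.var 0, .add (.var 0) (.pre a (.var 1))) } ∪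
  { e | ∃ a ∈ Al, e = (.add (.var 0) (.pre a (.var 1)), .var 0) }

/- ======================= Auxiliary development ======================= -/

section CCAux

variable {A : Type}

/-! ### Basic facts about `Step` -/

lemma not_step_nil {a : A} {p : Proc A} : ¬ Step (.nil : Proc A) a p := by
  intro h; cases h

lemma step_add_iff {p q : Proc A} {a : A} {r : Proc A} :
    Step (.add p q) a r ↔ Step p a r ∨ Step q a r := by
  constructor
  · intro h; cases h with
    | addL _ h => exact Or.inl h
    | addR _ h => exact Or.inr h
  · rintro (h | h)
    · exact Step.addL _ h
    · exact Step.addR _ h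

lemma step_pre_iff {b : A} {p : Proc A} {a : A} {r : Proc A} :
    Step (.pre b p) a r ↔ a = b ∧ r = p := by
  constructor
  · intro h; cases h; exact ⟨rfl, rfl⟩
  · rintro ⟨rfl, rfl⟩; exact Step.pre _ _

/-! ### Size measure -/

def psize : Proc A → ℕ
  | .nil => 1
  | .pre _ p => psize p + 1
  | .add p q => psize p + psize q + 1

lemma step_psize {p : Proc A} {a : A} {p' : Proc A} (h : Step p a p') :
    psize p' < psize p := by
  induction h with
  | pre a p => simp [psize]
  | addL q h ih => simp only [psize]; omega
  | addR p h ih => simp only [psize]; omega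

/-! ### Summands -/

def summands : Proc A → List (A × Proc A)
  | .nil => []
  | .pre a p => [(a, p)]
  | .add p q => summands p ++ summands q

lemma step_iff_mem {p : Proc A} {a : A} {p' : Proc A} :
    Step p a p' ↔ (a, p') ∈ summands p := by
  induction p with
  | nil => simp only [summands, List.not_mem_nil, iff_false]; exact not_step_nil
  | pre b q =>
      simp only [summands, step_pre_iff, List.mem_singleton, Prod.mk.injEq]
  | add p q ihp ihq =>
      simp only [summands, step_add_iff, List.mem_append, ihp, ihq]

def sumL : List (A × Proc A) → Proc A
  | [] => .nil
  | (a, p) :: l => .add (.pre a p) (sumL l)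

/-! ### ccLe is a precongruence -/

lemma ccLe_refl (Ar Al Abi : Set A) (p : Proc A) : ccLe Ar Al Abi p p := by
  refine ⟨Eq, ?_, rfl⟩
  intro u v huv; subst huv
  exact ⟨fun a _ p' h => ⟨p', h, rfl⟩, fun a _ q' h => ⟨q', h, rfl⟩⟩

lemma ccLe_trans {Ar Al Abi : Set A} {p q r : Proc A}
    (h1 : ccLe Ar Al Abi p q) (h2 : ccLe Ar Al Abi q r) : ccLe Ar Al Abi p r := by
  obtain ⟨S1, hS1, h1⟩ := h1
  obtain ⟨S2, hS2, h2⟩ := h2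
  refine ⟨fun u w => ∃ v, S1 u v ∧ S2 v w, ?_, ⟨q, h1, h2⟩⟩
  rintro u w ⟨v, huv, hvw⟩
  constructor
  · intro a ha u' hu
    obtain ⟨v', hv, hS⟩ := (hS1 u v huv).1 a ha u' hu
    obtain ⟨w', hw, hS'⟩ := (hS2 v w hvw).1 a ha v' hv
    exact ⟨w', hw, v', hS, hS'⟩
  · intro a ha w' hw
    obtain ⟨v', hv, hS'⟩ := (hS2 v w hvw).2 a ha w' hw
    obtain ⟨u', hu, hS⟩ := (hS1 u v huv).2 a ha v' hv
    exact ⟨u', hu, v', hS, hS'⟩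

lemma ccLe_pre {Ar Al Abi : Set A} (a : A) {p q : Proc A}
    (h : ccLe Ar Al Abi p q) : ccLe Ar Al Abi (.pre a p) (.pre a q) := by
  obtain ⟨S, hS, hpq⟩ := h
  refine ⟨fun u v => S u v ∨ (u = .pre a p ∧ v = .pre a q), ?_, Or.inr ⟨rfl, rfl⟩⟩
  rintro u v (huv | ⟨rfl, rfl⟩)
  · constructor
    · intro b hb u' hu
      obtain ⟨v', hv, h'⟩ := (hS u v huv).1 b hb u' hu
      exact ⟨v', hv, Or.inl h'⟩
    · intro b hb v' hv
      obtain ⟨u', hu, h'⟩ := (hS u v huv).2 b hb v' hv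
      exact ⟨u', hu, Or.inl h'⟩
  · constructor
    · intro b hb u' hu
      rw [step_pre_iff] at hu
      obtain ⟨rfl, rfl⟩ := hu
      exact ⟨q, Step.pre _ _, Or.inl hpq⟩
    · intro b hb v' hv
      rw [step_pre_iff] at hv
      obtain ⟨rfl, rfl⟩ := hv
      exact ⟨p, Step.pre _ _, Or.inl hpq⟩

lemma ccLe_add {Ar Al Abi : Set A} {p q r s : Proc A}
    (h1 : ccLe Ar Al Abi p q) (h2 : ccLe Ar Al Abi r s) :
    ccLe Ar Al Abi (.add p r) (.add q s) := by
  obtain ⟨S1, hS1, h1⟩ := h1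
  obtain ⟨S2, hS2, h2⟩ := h2
  refine ⟨fun u v => S1 u v ∨ S2 u v ∨
      (∃ p' q' r' s', S1 p' q' ∧ S2 r' s' ∧ u = .add p' r' ∧ v = .add q' s'),
    ?_, Or.inr (Or.inr ⟨p, q, r, s, h1, h2, rfl, rfl⟩)⟩
  rintro u v (huv | huv | ⟨p', q', r', s', hpq, hrs, rfl, rfl⟩)
  · constructor
    · intro b hb u' hu
      obtain ⟨v', hv, h'⟩ := (hS1 u v huv).1 b hb u' hu
      exact ⟨v', hv, Or.inl h'⟩
    · intro b hb v' hv
      obtain ⟨u', hu, h'⟩ := (hS1 u v huv).2 b hb v' hv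
      exact ⟨u', hu, Or.inl h'⟩
  · constructor
    · intro b hb u' hu
      obtain ⟨v', hv, h'⟩ := (hS2 u v huv).1 b hb u' hu
      exact ⟨v', hv, Or.inr (Or.inl h')⟩
    · intro b hb v' hv
      obtain ⟨u', hu, h'⟩ := (hS2 u v huv).2 b hb v' hv
      exact ⟨u', hu, Or.inr (Or.inl h')⟩
  · constructor
    · intro b hb u' hu
      rw [step_add_iff] at hu
      rcases hu with hu | hu
      · obtain ⟨v', hv, h'⟩ := (hS1 p' q' hpq).1 b hb u' hu
        exact ⟨v', Step.addL _ hv, Or.inl h'⟩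
      · obtain ⟨v', hv, h'⟩ := (hS2 r' s' hrs).1 b hb u' hu
        exact ⟨v', Step.addR _ hv, Or.inr (Or.inl h')⟩
    · intro b hb v' hv
      rw [step_add_iff] at hv
      rcases hv with hv | hv
      · obtain ⟨u', hu, h'⟩ := (hS1 p' q' hpq).2 b hb v' hv
        exact ⟨u', Step.addL _ hu, Or.inl h'⟩
      · obtain ⟨u', hu, h'⟩ := (hS2 r' s' hrs).2 b hb v' hv
        exact ⟨u', Step.addR _ hu, Or.inr (Or.inl h')⟩

/-- Processes with exactly the same immediate transitions (to identical targets)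
are related by `ccLe` in both directions. -/
lemma ccLe_of_sameSteps {Ar Al Abi : Set A} {p q : Proc A}
    (h : ∀ a r, Step p a r ↔ Step q a r) : ccLe Ar Al Abi p q := by
  refine ⟨fun u v => u = v ∨ (∀ a r, Step u a r ↔ Step v a r), ?_, Or.inr h⟩
  rintro u v (rfl | huv)
  · exact ⟨fun a _ p' h => ⟨p', h, Or.inl rfl⟩, fun a _ q' h => ⟨q', h, Or.inl rfl⟩⟩
  · constructor
    · intro a _ u' hu
      exact ⟨u', (huv a u').1 hu, Or.inl rfl⟩
    · intro a _ v' hv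
      exact ⟨v', (huv a v').2 hv, Or.inl rfl⟩

lemma ccLe_addAr {Ar Al Abi : Set A} (hpart : IsPartition Ar Al Abi)
    {a : A} (ha : a ∈ Ar) (p t : Proc A) :
    ccLe Ar Al Abi p (.add p (.pre a t)) := by
  refine ⟨fun u v => u = v ∨ v = .add u (.pre a t), ?_, Or.inr rfl⟩
  rintro u v (rfl | rfl)
  · exact ⟨fun a _ p' h => ⟨p', h, Or.inl rfl⟩, fun a _ q' h => ⟨q', h, Or.inl rfl⟩⟩
  · constructor
    · intro b _ u' hu
      exact ⟨u', Step.addL _ hu, Or.inl rfl⟩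
    · intro b hb v' hv
      rw [step_add_iff] at hv
      rcases hv with hv | hv
      · exact ⟨v', hv, Or.inl rfl⟩
      · rw [step_pre_iff] at hv
        obtain ⟨rfl, rfl⟩ := hv
        exfalso
        rcases hb with hb | hb
        · exact hpart.2.1.le_bot ⟨ha, hb⟩
        · exact hpart.2.2.1.le_bot ⟨ha, hb⟩

lemma ccLe_dropAl {Ar Al Abi : Set A} (hpart : IsPartition Ar Al Abi)
    {a : A} (ha : a ∈ Al) (p t : Proc A) :
    ccLe Ar Al Abi (.add p (.pre a t)) p := by
  refine ⟨fun u v => u = v ∨ u = .add v (.pre a t), ?_, Or.inr rfl⟩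
  rintro u v (rfl | rfl)
  · exact ⟨fun a _ p' h => ⟨p', h, Or.inl rfl⟩, fun a _ q' h => ⟨q', h, Or.inl rfl⟩⟩
  · constructor
    · intro b hb u' hu
      rw [step_add_iff] at hu
      rcases hu with hu | hu
      · exact ⟨u', hu, Or.inl rfl⟩
      · rw [step_pre_iff] at hu
        obtain ⟨rfl, rfl⟩ := hu
        exfalso
        rcases hb with hb | hb
        · exact hpart.2.1.le_bot ⟨hb, ha⟩
        · exact hpart.2.2.2.le_bot ⟨ha, hb⟩
    · intro b _ v' hv
      exact ⟨v', Step.addL _ hv, Or.inl rfl⟩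

/-! ### Derivability infrastructure -/

variable (Ar Al : Set A)

/-- Abbreviation for derivability from the cc axioms, and derivable equality. -/
def Dle (p q : Proc A) : Prop := DerivLe (AxCCPre Ar Al) p q

def Deq (p q : Proc A) : Prop := Dle Ar Al p q ∧ Dle Ar Al q p

variable {Ar Al}

lemma Deq.refl (p : Proc A) : Deq Ar Al p p := ⟨.refl p, .refl p⟩

lemma Deq.symm' {p q : Proc A} (h : Deq Ar Al p q) : Deq Ar Al q p := ⟨h.2, h.1⟩

lemma Deq.trans' {p q r : Proc A} (h1 : Deq Ar Al p q) (h2 : Deq Ar Al q r) :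
    Deq Ar Al p r := ⟨h1.1.trans h2.1, h2.2.trans h1.2⟩

lemma Deq.addc {p q r s : Proc A} (h1 : Deq Ar Al p q) (h2 : Deq Ar Al r s) :
    Deq Ar Al (.add p r) (.add q s) := ⟨h1.1.add h2.1, h1.2.add h2.2⟩

lemma Deq.prec (a : A) {p q : Proc A} (h : Deq Ar Al p q) :
    Deq Ar Al (.pre a p) (.pre a q) := ⟨.pre a h.1, .pre a h.2⟩

lemma mem_axB {e : Term A × Term A} (h : e ∈ BEqns A) : e ∈ AxCCPre Ar Al :=
  Or.inl (Or.inl (Or.inl h))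

lemma mem_axB' {e : Term A × Term A} (h : e ∈ BEqns A) : e.swap ∈ AxCCPre Ar Al :=
  Or.inl (Or.inl (Or.inr ⟨e, h, rfl⟩))

/-- Both directions of a B-equation instance are derivable. -/
lemma deq_of_B {l r : Term A} (h : (l, r) ∈ BEqns A) (σ : ℕ → Proc A) :
    Deq Ar Al (l.subst σ) (r.subst σ) :=
  ⟨.ax l r σ (mem_axB h), .ax r l σ (mem_axB' (e := (l, r)) h)⟩

lemma deq_comm (p q : Proc A) : Deq Ar Al (.add p q) (.add q p) := by
  have := deq_of_B (Ar := Ar) (Al := Al)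
    (l := .add (.var 0) (.var 1)) (r := .add (.var 1) (.var 0))
    (by simp [BEqns]) (fun n => match n with | 0 => p | _ => q)
  simpa [Term.subst] using this

lemma deq_assoc (p q r : Proc A) :
    Deq Ar Al (.add (.add p q) r) (.add p (.add q r)) := by
  have := deq_of_B (Ar := Ar) (Al := Al)
    (l := .add (.add (.var 0) (.var 1)) (.var 2)) (r := .add (.var 0) (.add (.var 1) (.var 2)))
    (by simp [BEqns]) (fun n => match n with | 0 => p | 1 => q | _ => r)
  simpa [Term.subst] using this

lemma deq_idem (p : Proc A) : Deq Ar Al (.add p p) p := by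
  have := deq_of_B (Ar := Ar) (Al := Al)
    (l := .add (.var 0) (.var 0)) (r := .var 0)
    (by simp [BEqns]) (fun _ => p)
  simpa [Term.subst] using this

lemma deq_addnil (p : Proc A) : Deq Ar Al (.add p .nil) p := by
  have := deq_of_B (Ar := Ar) (Al := Al)
    (l := .add (.var 0) .nil) (r := .var 0)
    (by simp [BEqns]) (fun _ => p)
  simpa [Term.subst] using this

lemma deq_niladd (p : Proc A) : Deq Ar Al (.add .nil p) p :=
  (deq_comm .nil p).trans' (deq_addnil p)

lemma dle_addAr {a : A} (ha : a ∈ Ar) (p t : Proc A) :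
    Dle Ar Al p (.add p (.pre a t)) := by
  have := DerivLe.ax (E := AxCCPre Ar Al)
    (.var 0) (.add (.var 0) (.pre a (.var 1)))
    (fun n => match n with | 0 => p | _ => t)
    (Or.inl (Or.inr ⟨a, ha, rfl⟩))
  simpa [Term.subst, Dle] using this

lemma dle_dropAl {a : A} (ha : a ∈ Al) (p t : Proc A) :
    Dle Ar Al (.add p (.pre a t)) p := by
  have := DerivLe.ax (E := AxCCPre Ar Al)
    (.add (.var 0) (.pre a (.var 1))) (.var 0)
    (fun n => match n with | 0 => p | _ => t)
    (Or.inr ⟨a, ha, rfl⟩)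
  simpa [Term.subst, Dle] using this

/-- Swap lemma: `x + (y + z) ≡ y + (x + z)`. -/
lemma deq_swap (x y z : Proc A) :
    Deq Ar Al (.add x (.add y z)) (.add y (.add x z)) :=
  ((deq_assoc x y z).symm'.trans'
    ((Deq.addc (deq_comm x y) (Deq.refl z)).trans' (deq_assoc y x z)))

/-! ### Lemmas about `sumL` -/

lemma deq_sumL_append (X Y : List (A × Proc A)) :
    Deq Ar Al (sumL (X ++ Y)) (.add (sumL X) (sumL Y)) := by
  induction X with
  | nil => exact (deq_niladd (sumL Y)).symm'
  | cons x X ih =>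
      obtain ⟨a, p⟩ := x
      exact ((Deq.addc (Deq.refl (.pre a p)) ih).trans'
        (deq_assoc (.pre a p) (sumL X) (sumL Y)).symm')

lemma deq_absorb {a : A} {p : Proc A} {L : List (A × Proc A)} (h : (a, p) ∈ L) :
    Deq Ar Al (sumL L) (.add (.pre a p) (sumL L)) := by
  induction L with
  | nil => simp at h
  | cons x L ih =>
      obtain ⟨b, r⟩ := x
      rcases List.mem_cons.mp h with h | h
      · obtain ⟨rfl, rfl⟩ := Prod.mk.injEq .. ▸ h
        -- sumL = add (pre a p) (sumL L); goal: ≡ add (pre a p) (add (pre a p) (sumL L))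
        refine Deq.symm' ?_
        exact ((deq_assoc (.pre a p) (.pre a p) (sumL L)).symm'.trans'
          (Deq.addc (deq_idem (.pre a p)) (Deq.refl (sumL L))))
      · -- in tail
        have ih' := ih h
        exact ((Deq.addc (Deq.refl (.pre b r)) ih').trans'
          (deq_swap (.pre b r) (.pre a p) (sumL L)))

/-- If every element of `L'` occurs in `L`, then `L ≡ L' ++ L`. -/
lemma deq_dup {L' L : List (A × Proc A)} (h : ∀ x ∈ L', x ∈ L) :
    Deq Ar Al (sumL L) (sumL (L' ++ L)) := by
  induction L' with
  | nil => exact Deq.refl _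
  | cons x L' ih =>
      obtain ⟨a, p⟩ := x
      have ih' := ih (fun y hy => h y (List.mem_cons_of_mem _ hy))
      have habs : ((a : A), p) ∈ L' ++ L :=
        List.mem_append.mpr (Or.inr (h (a, p) (List.mem_cons_self)))
      exact (ih'.trans' (deq_absorb habs))

/-- Drop a sum of summands, each of which is either `Al`-prefixed or absorbed by `P`. -/
lemma dle_dropAll {L : List (A × Proc A)} {P : Proc A}
    (h : ∀ x ∈ L, x.1 ∈ Al ∨ Deq Ar Al P (.add (.pre x.1 x.2) P)) :
    Dle Ar Al (.add (sumL L) P) P := by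
  induction L with
  | nil => exact (deq_niladd P).1
  | cons x L ih =>
      obtain ⟨a, p⟩ := x
      have ih' := ih (fun y hy => h y (List.mem_cons_of_mem _ hy))
      have step1 : Dle Ar Al (.add (sumL ((a, p) :: L)) P)
          (.add (.pre a p) (.add (sumL L) P)) :=
        (deq_assoc (.pre a p) (sumL L) P).1
      have step2 : Dle Ar Al (.add (.pre a p) (.add (sumL L) P)) (.add (.pre a p) P) :=
        (DerivLe.refl _).add ih'
      have step3 : Dle Ar Al (.add (.pre a p) P) P := by
        rcases h (a, p) (List.mem_cons_self) with ha | habs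
        · exact ((deq_comm (.pre a p) P).1).trans (dle_dropAl ha P p)
        · exact habs.2
      exact (step1.trans step2).trans step3

/-- Add a sum of summands, each of which is either `Ar`-prefixed or absorbed by `Q`. -/
lemma dle_addAll {R : List (A × Proc A)} {Q : Proc A}
    (h : ∀ x ∈ R, x.1 ∈ Ar ∨ Deq Ar Al Q (.add (.pre x.1 x.2) Q)) :
    Dle Ar Al Q (.add (sumL R) Q) := by
  induction R with
  | nil => exact (deq_niladd Q).2
  | cons x R ih =>
      obtain ⟨a, p⟩ := x
      have ih' := ih (fun y hy => h y (List.mem_cons_of_mem _ hy))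
      have step3 : Dle Ar Al Q (.add (.pre a p) Q) := by
        rcases h (a, p) (List.mem_cons_self) with ha | habs
        · exact (dle_addAr ha Q p).trans (deq_comm Q (.pre a p)).1
        · exact habs.1
      have step2 : Dle Ar Al (.add (.pre a p) Q) (.add (.pre a p) (.add (sumL R) Q)) :=
        (DerivLe.refl _).add ih'
      have step1 : Dle Ar Al (.add (.pre a p) (.add (sumL R) Q))
          (.add (sumL ((a, p) :: R)) Q) :=
        (deq_assoc (.pre a p) (sumL R) Q).2
      exact (step3.trans step2).trans step1

/-- Congruence over lists of pairs. -/
lemma dle_congrList {T : List (A × Proc A × Proc A)}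
    (h : ∀ t ∈ T, Dle Ar Al t.2.1 t.2.2) :
    Dle Ar Al (sumL (T.map fun t => (t.1, t.2.1))) (sumL (T.map fun t => (t.1, t.2.2))) := by
  induction T with
  | nil => exact DerivLe.refl _
  | cons t T ih =>
      exact (DerivLe.pre t.1 (h t (List.mem_cons_self))).add
        (ih fun y hy => h y (List.mem_cons_of_mem _ hy))

/-- Normal form: every process is derivably equal to the sum of its summands. -/
lemma deq_normal (p : Proc A) : Deq Ar Al p (sumL (summands p)) := by
  induction p with
  | nil => exact Deq.refl _
  | pre a p _ => exact (deq_addnil (.pre a p)).symm'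
  | add p q ihp ihq =>
      exact ((Deq.addc ihp ihq).trans' (deq_sumL_append (summands p) (summands q)).symm')

/-- Skolemization over a list. -/
lemma skolemList {α β : Type} (L : List α) (P : α → Prop) (W : α → β → Prop)
    (h : ∀ x ∈ L, P x ∨ ∃ y, W x y) :
    ∃ T : List (α × β), (∀ x ∈ L, P x ∨ ∃ y, (x, y) ∈ T) ∧
      (∀ t ∈ T, t.1 ∈ L ∧ W t.1 t.2) := by
  induction L with
  | nil => exact ⟨[], by simp, by simp⟩
  | cons x L ih =>
      obtain ⟨T', hT1, hT2⟩ := ih (fun y hy => h y (List.mem_cons_of_mem _ hy))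
      rcases h x (List.mem_cons_self) with hx | ⟨y, hy⟩
      · refine ⟨T', ?_, ?_⟩
        · intro z hz
          rcases List.mem_cons.mp hz with rfl | hz
          · exact Or.inl hx
          · exact hT1 z hz
        · exact fun t ht => ⟨List.mem_cons_of_mem _ (hT2 t ht).1, (hT2 t ht).2⟩
      · refine ⟨(x, y) :: T', ?_, ?_⟩
        · intro z hz
          rcases List.mem_cons.mp hz with rfl | hz
          · exact Or.inr ⟨y, List.mem_cons_self⟩
          · rcases hT1 z hz with hP | ⟨y', hy'⟩
            · exact Or.inl hP
            · exact Or.inr ⟨y', List.mem_cons_of_mem _ hy'⟩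
        · intro t ht
          rcases List.mem_cons.mp ht with rfl | ht
          · exact ⟨List.mem_cons_self, hy⟩
          · exact ⟨List.mem_cons_of_mem _ (hT2 t ht).1, (hT2 t ht).2⟩

/-- Core completeness lemma at the level of summand lists. -/
lemma dle_of_lists {L R : List (A × Proc A)}
    (hL : ∀ x ∈ L, x.1 ∈ Al ∨ ∃ q', (x.1, q') ∈ R ∧ Dle Ar Al x.2 q')
    (hR : ∀ x ∈ R, x.1 ∈ Ar ∨ ∃ p', (x.1, p') ∈ L ∧ Dle Ar Al p' x.2) :
    Dle Ar Al (sumL L) (sumL R) := by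
  obtain ⟨TL, hTL1, hTL2⟩ := skolemList L (fun x => x.1 ∈ Al)
    (fun x q' => (x.1, q') ∈ R ∧ Dle Ar Al x.2 q') hL
  obtain ⟨TR, hTR1, hTR2⟩ := skolemList R (fun x => x.1 ∈ Ar)
    (fun x p' => (x.1, p') ∈ L ∧ Dle Ar Al p' x.2) hR
  -- triples (action, left target, right target)
  set T : List (A × Proc A × Proc A) :=
    (TL.map fun t => (t.1.1, t.1.2, t.2)) ++ (TR.map fun t => (t.1.1, t.2, t.1.2)) with hT
  have hTprops : ∀ t ∈ T, (t.1, t.2.1) ∈ L ∧ (t.1, t.2.2) ∈ R ∧ Dle Ar Al t.2.1 t.2.2 := by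
    intro t ht
    rw [hT, List.mem_append] at ht
    rcases ht with ht | ht
    · obtain ⟨u, hu, rfl⟩ := List.mem_map.mp ht
      exact ⟨(hTL2 u hu).1, (hTL2 u hu).2.1, (hTL2 u hu).2.2⟩
    · obtain ⟨u, hu, rfl⟩ := List.mem_map.mp ht
      exact ⟨(hTR2 u hu).2.1, (hTR2 u hu).1, (hTR2 u hu).2.2⟩
  set L1 : List (A × Proc A) := T.map fun t => (t.1, t.2.1) with hL1
  set R1 : List (A × Proc A) := T.map fun t => (t.1, t.2.2) with hR1
  have hL1sub : ∀ x ∈ L1, x ∈ L := by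
    intro x hx
    obtain ⟨t, ht, rfl⟩ := List.mem_map.mp hx
    exact (hTprops t ht).1
  have hR1sub : ∀ x ∈ R1, x ∈ R := by
    intro x hx
    obtain ⟨t, ht, rfl⟩ := List.mem_map.mp hx
    exact (hTprops t ht).2.1
  have hLcover : ∀ x ∈ L, x.1 ∈ Al ∨ x ∈ L1 := by
    intro x hx
    rcases hTL1 x hx with hP | ⟨y, hy⟩
    · exact Or.inl hP
    · refine Or.inr ?_
      rw [hL1, hT]
      refine List.mem_map.mpr ⟨(x.1, x.2, y), ?_, rfl⟩
      exact List.mem_append.mpr (Or.inl (List.mem_map.mpr ⟨(x, y), hy, rfl⟩))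
  have hRcover : ∀ x ∈ R, x.1 ∈ Ar ∨ x ∈ R1 := by
    intro x hx
    rcases hTR1 x hx with hP | ⟨y, hy⟩
    · exact Or.inl hP
    · refine Or.inr ?_
      rw [hR1, hT]
      refine List.mem_map.mpr ⟨(x.1, y, x.2), ?_, rfl⟩
      exact List.mem_append.mpr (Or.inr (List.mem_map.mpr ⟨(x, y), hy, rfl⟩))
  -- Stage 1: sumL L ≤ sumL L1
  have stage1 : Dle Ar Al (sumL L) (sumL L1) := by
    have h1 : Dle Ar Al (sumL L) (sumL (L1 ++ L)) := (deq_dup hL1sub).1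
    have h2 : Dle Ar Al (sumL (L1 ++ L)) (.add (sumL L1) (sumL L)) :=
      (deq_sumL_append L1 L).1
    have h3 : Dle Ar Al (.add (sumL L1) (sumL L)) (.add (sumL L) (sumL L1)) :=
      (deq_comm _ _).1
    have h4 : Dle Ar Al (.add (sumL L) (sumL L1)) (sumL L1) := by
      refine dle_dropAll ?_
      intro x hx
      rcases hLcover x hx with h | h
      · exact Or.inl h
      · exact Or.inr (deq_absorb (a := x.1) (p := x.2) h)
    exact ((h1.trans h2).trans h3).trans h4
  -- Stage 2: congruence
  have stage2 : Dle Ar Al (sumL L1) (sumL R1) :=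
    dle_congrList (fun t ht => (hTprops t ht).2.2)
  -- Stage 3: sumL R1 ≤ sumL R
  have stage3 : Dle Ar Al (sumL R1) (sumL R) := by
    have h4 : Dle Ar Al (sumL R1) (.add (sumL R) (sumL R1)) := by
      refine dle_addAll ?_
      intro x hx
      rcases hRcover x hx with h | h
      · exact Or.inl h
      · exact Or.inr (deq_absorb (a := x.1) (p := x.2) h)
    have h3 : Dle Ar Al (.add (sumL R) (sumL R1)) (.add (sumL R1) (sumL R)) :=
      (deq_comm _ _).1
    have h2 : Dle Ar Al (.add (sumL R1) (sumL R)) (sumL (R1 ++ R)) :=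
      (deq_sumL_append R1 R).2
    have h1 : Dle Ar Al (sumL (R1 ++ R)) (sumL R) := (deq_dup hR1sub).2
    exact ((h4.trans h3).trans h2).trans h1
  exact (stage1.trans stage2).trans stage3

/-- Completeness: by strong induction on the combined size. -/
lemma dle_of_ccLe {Abi : Set A} (hpart : IsPartition Ar Al Abi) :
    ∀ n (p q : Proc A), psize p + psize q ≤ n → ccLe Ar Al Abi p q → Dle Ar Al p q := by
  intro n
  induction n with
  | zero =>
      intro p q hsize
      cases p <;> simp [psize] at hsize
  | succ n ih =>
      intro p q hsize hcc
      obtain ⟨S, hS, hpq⟩ := hcc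
      have huniv : ∀ a : A, a ∈ Ar ∪ Al ∪ Abi := by
        intro a; rw [hpart.1]; trivial
      have core : Dle Ar Al (sumL (summands p)) (sumL (summands q)) := by
        refine dle_of_lists ?_ ?_
        · rintro ⟨a, p'⟩ hx
          have hstep : Step p a p' := step_iff_mem.mpr hx
          rcases huniv a with (ha | ha) | ha
          · -- a ∈ Ar
            obtain ⟨q', hq', hS'⟩ := (hS p q hpq).1 a (Or.inl ha) p' hstep
            refine Or.inr ⟨q', step_iff_mem.mp hq', ?_⟩
            have h1 := step_psize hstep
            have h2 := step_psize hq'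
            exact ih p' q' (by omega) ⟨S, hS, hS'⟩
          · exact Or.inl ha
          · -- a ∈ Abi
            obtain ⟨q', hq', hS'⟩ := (hS p q hpq).1 a (Or.inr ha) p' hstep
            refine Or.inr ⟨q', step_iff_mem.mp hq', ?_⟩
            have h1 := step_psize hstep
            have h2 := step_psize hq'
            exact ih p' q' (by omega) ⟨S, hS, hS'⟩
        · rintro ⟨a, q'⟩ hx
          have hstep : Step q a q' := step_iff_mem.mpr hx
          rcases huniv a with (ha | ha) | ha
          · exact Or.inl ha
          · -- a ∈ Al
            obtain ⟨p', hp', hS'⟩ := (hS p q hpq).2 a (Or.inl ha) q' hstep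
            refine Or.inr ⟨p', step_iff_mem.mp hp', ?_⟩
            have h1 := step_psize hstep
            have h2 := step_psize hp'
            exact ih p' q' (by omega) ⟨S, hS, hS'⟩
          · -- a ∈ Abi
            obtain ⟨p', hp', hS'⟩ := (hS p q hpq).2 a (Or.inr ha) q' hstep
            refine Or.inr ⟨p', step_iff_mem.mp hp', ?_⟩
            have h1 := step_psize hstep
            have h2 := step_psize hp'
            exact ih p' q' (by omega) ⟨S, hS, hS'⟩
      exact ((deq_normal p).1.trans core).trans (deq_normal q).2

/-- Soundness. -/
lemma ccLe_of_dle {Abi : Set A} (hpart : IsPartition Ar Al Abi) {p q : Proc A}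
    (h : Dle Ar Al p q) : ccLe Ar Al Abi p q := by
  induction h with
  | refl p => exact ccLe_refl Ar Al Abi p
  | trans h1 h2 ih1 ih2 => exact ccLe_trans ih1 ih2
  | pre a h ih => exact ccLe_pre a ih
  | add h1 h2 ih1 ih2 => exact ccLe_add ih1 ih2
  | ax l r σ hmem =>
      rcases hmem with ((hB | ⟨e, he, hswap⟩) | ⟨a, ha, he⟩) | ⟨a, ha, he⟩
      · -- B1–B4, direct orientation
        simp only [BEqns, Set.mem_insert_iff, Set.mem_singleton_iff] at hB
        apply ccLe_of_sameSteps
        rcases hB with h | h | h | h <;>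
          (injection h with h1 h2; subst h1; subst h2) <;>
          intro a r <;>
          simp [Term.subst, step_add_iff, step_pre_iff] <;> tauto
      · -- B1–B4, swapped orientation
        simp only [BEqns, Set.mem_insert_iff, Set.mem_singleton_iff] at he
        apply ccLe_of_sameSteps
        rcases he with h | h | h | h <;>
          subst h <;>
          simp only [Prod.swap] at hswap <;>
          (injection hswap with h1 h2; subst h1; subst h2) <;>
          intro a r <;>
          simp [Term.subst, step_add_iff, step_pre_iff] <;> tauto
      · injection he with h1 h2
        subst h1; subst h2
        exact ccLe_addAr hpart ha (σ 0) (σ 1)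
      · injection he with h1 h2
        subst h1; subst h2
        exact ccLe_dropAl hpart ha (σ 0) (σ 1)

end CCAux

/-- The `(A^r, A^l)`-simulation preorder coincides with derivability from
`{B1, B2, B3, B4, S^r_p, S^l_p}`. -/
theorem cc_preorder_axiomatization {A : Type} (Ar Al Abi : Set A)
    (hpart : IsPartition Ar Al Abi) (p q : Proc A) :
    ccLe Ar Al Abi p q ↔ DerivLe (AxCCPre Ar Al) p q := by
  constructor
  · intro h
    exact dle_of_ccLe hpart (psize p + psize q) p q le_rfl h
  · intro h
    exact ccLe_of_dle hpart h
end

section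
/- Let A be an action set with partition {A^r, A^l, A^bi} where A^bi = ∅. Let p_r, q_r, p_l, q_l be closed BCCSP processes with I(p_r) ⊆ A^r, I(q_r) ⊆ A^r, I(p_l) ⊆ A^l and I(q_l) ⊆ A^l. Then p_r + p_l ≲_CC q_r + q_l if and only if p_r ≲_CC q_r and p_l ≲_CC q_l. -/
/-- When `A^bi = ∅`, for processes decomposed into covariant and contravariant
parts, `p_r + p_l ≲_CC q_r + q_l` iff `p_r ≲_CC q_r` and `p_l ≲_CC q_l`. -/
theorem cc_le_decompose {A : Type} (Ar Al Abi : Set A)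
    (hpart : IsPartition Ar Al Abi) (hbi : Abi = ∅)
    (pr qr pl ql : Proc A)
    (hpr : initials pr ⊆ Ar) (hqr : initials qr ⊆ Ar)
    (hpl : initials pl ⊆ Al) (hql : initials ql ⊆ Al) :
    ccLe Ar Al Abi (.add pr pl) (.add qr ql) ↔
      ccLe Ar Al Abi pr qr ∧ ccLe Ar Al Abi pl ql := by
  obtain ⟨-, hdisj, -, -⟩ := hpart
  have hrl : ∀ a ∈ Ar, a ∉ Al := fun a ha => Set.disjoint_left.mp hdisj ha
  subst hbi
  constructor
  · rintro ⟨S, hS, hpq⟩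
    constructor
    · refine ⟨fun p q => S p q ∨ (p = pr ∧ q = qr), ?_, Or.inr ⟨rfl, rfl⟩⟩
      rintro p q (h | ⟨rfl, rfl⟩)
      · obtain ⟨h1, h2⟩ := hS p q h
        exact ⟨fun a ha p' hs => (h1 a ha p' hs).imp (fun q' hq => ⟨hq.1, Or.inl hq.2⟩),
               fun a ha q' hs => (h2 a ha q' hs).imp (fun p' hp => ⟨hp.1, Or.inl hp.2⟩)⟩
      · obtain ⟨h1, h2⟩ := hS _ _ hpq
        constructor
        · intro a ha p' hs
          obtain ⟨q', hq, hS'⟩ := h1 a ha p' (Step.addL _ hs)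
          cases hq with
          | addL _ hq' => exact ⟨_, hq', Or.inl hS'⟩
          | addR _ hq' =>
            have : a ∈ Al := hql ⟨_, hq'⟩
            have : a ∈ Ar := by simpa using ha
            exact absurd ‹a ∈ Al› (hrl a this)
        · intro a ha q' hs
          have : a ∈ Ar := hqr ⟨_, hs⟩
          have ha' : a ∈ Al := by simpa using ha
          exact absurd ha' (hrl a this)
    · refine ⟨fun p q => S p q ∨ (p = pl ∧ q = ql), ?_, Or.inr ⟨rfl, rfl⟩⟩
      rintro p q (h | ⟨rfl, rfl⟩)
      · obtain ⟨h1, h2⟩ := hS p q h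
        exact ⟨fun a ha p' hs => (h1 a ha p' hs).imp (fun q' hq => ⟨hq.1, Or.inl hq.2⟩),
               fun a ha q' hs => (h2 a ha q' hs).imp (fun p' hp => ⟨hp.1, Or.inl hp.2⟩)⟩
      · obtain ⟨h1, h2⟩ := hS _ _ hpq
        constructor
        · intro a ha p' hs
          have : a ∈ Al := hpl ⟨_, hs⟩
          have ha' : a ∈ Ar := by simpa using ha
          exact absurd ‹a ∈ Al› (hrl a ha')
        · intro a ha q' hs
          obtain ⟨p', hp, hS'⟩ := h2 a ha q' (Step.addR _ hs)
          cases hp with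
          | addL _ hp' =>
            have : a ∈ Ar := hpr ⟨_, hp'⟩
            have ha' : a ∈ Al := by simpa using ha
            exact absurd ha' (hrl a this)
          | addR _ hp' => exact ⟨_, hp', Or.inl hS'⟩
  · rintro ⟨⟨S1, hS1, h1⟩, ⟨S2, hS2, h2⟩⟩
    refine ⟨fun p q => S1 p q ∨ S2 p q ∨ (p = .add pr pl ∧ q = .add qr ql), ?_,
      Or.inr (Or.inr ⟨rfl, rfl⟩)⟩
    rintro p q (h | h | ⟨rfl, rfl⟩)
    · obtain ⟨ha', hb'⟩ := hS1 p q h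
      exact ⟨fun a ha p' hs => (ha' a ha p' hs).imp (fun q' hq => ⟨hq.1, Or.inl hq.2⟩),
             fun a ha q' hs => (hb' a ha q' hs).imp (fun p' hp => ⟨hp.1, Or.inl hp.2⟩)⟩
    · obtain ⟨ha', hb'⟩ := hS2 p q h
      exact ⟨fun a ha p' hs => (ha' a ha p' hs).imp (fun q' hq => ⟨hq.1, Or.inr (Or.inl hq.2)⟩),
             fun a ha q' hs => (hb' a ha q' hs).imp (fun p' hp => ⟨hp.1, Or.inr (Or.inl hp.2)⟩)⟩
    · constructor
      · intro a ha p' hs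
        have har : a ∈ Ar := by simpa using ha
        cases hs with
        | addL _ hp' =>
          obtain ⟨q', hq, hS'⟩ := (hS1 _ _ h1).1 a ha p' hp'
          exact ⟨_, Step.addL _ hq, Or.inl hS'⟩
        | addR _ hp' =>
          exact absurd (hpl ⟨_, hp'⟩) (hrl a har)
      · intro a ha q' hs
        have hal : a ∈ Al := by simpa using ha
        cases hs with
        | addL _ hq' =>
          exact absurd hal (hrl a (hqr ⟨_, hq'⟩))
        | addR _ hq' =>
          obtain ⟨p', hp, hS'⟩ := (hS2 _ _ h2).2 a ha q' hq'
          exact ⟨_, Step.addR _ hp, Or.inr (Or.inl hS')⟩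
end

section
/- If the action set A is infinite, then the conformance precongruence ⊑_CS is the coarsest precongruence contained in the conformance simulation preorder ≲_CS: ⊑_CS is a preorder contained in ≲_CS that is preserved by prefixing and by +, and every preorder contained in ≲_CS that is preserved by prefixing and by + is contained in ⊑_CS. -/
namespace CSAux

variable {A : Type}

theorem isConfSim_csLe : IsConfSim (csLe (A := A)) := by
  rintro p q ⟨R, hR, hpq⟩
  obtain ⟨h1, h2⟩ := hR p q hpq
  refine ⟨h1, fun a q' hs ha => ?_⟩
  obtain ⟨p', hs', hr'⟩ := h2 a q' hs ha
  exact ⟨p', hs', R, hR, hr'⟩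

theorem csLe_refl (p : Proc A) : csLe p p := by
  refine ⟨Eq, ?_, rfl⟩
  rintro p q rfl
  exact ⟨subset_rfl, fun a q' hs _ => ⟨q', hs, rfl⟩⟩

theorem csLe_trans {p q r : Proc A} (h1 : csLe p q) (h2 : csLe q r) : csLe p r := by
  refine ⟨fun x z => ∃ y, csLe x y ∧ csLe y z, ?_, q, h1, h2⟩
  rintro x z ⟨y, hxy, hyz⟩
  obtain ⟨i1, s1⟩ := isConfSim_csLe x y hxy
  obtain ⟨i2, s2⟩ := isConfSim_csLe y z hyz
  refine ⟨i1.trans i2, fun a z' hs ha => ?_⟩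
  obtain ⟨y', hsy, hy'⟩ := s2 a z' hs (i1 ha)
  obtain ⟨x', hsx, hx'⟩ := s1 a y' hsy ha
  exact ⟨x', hsx, y', hx', hy'⟩

theorem step_pre_inv {a b : A} {p p' : Proc A} (h : Step (.pre a p) b p') :
    b = a ∧ p' = p := by cases h; exact ⟨rfl, rfl⟩

theorem step_add_inv {p q : Proc A} {a : A} {x : Proc A} (h : Step (.add p q) a x) :
    Step p a x ∨ Step q a x := by cases h with
  | addL _ h => exact Or.inl h
  | addR _ h => exact Or.inr h

theorem initials_add (p q : Proc A) :
    initials (.add p q) = initials p ∪ initials q := by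
  ext a
  constructor
  · rintro ⟨x, hx⟩
    rcases step_add_inv hx with h | h
    · exact Or.inl ⟨x, h⟩
    · exact Or.inr ⟨x, h⟩
  · rintro (⟨x, hx⟩ | ⟨x, hx⟩)
    · exact ⟨x, Step.addL q hx⟩
    · exact ⟨x, Step.addR p hx⟩

theorem csPre_pre (a : A) {p q : Proc A} (h : csPre p q) :
    csPre (.pre a p) (.pre a q) := by
  obtain ⟨hle, _⟩ := h
  constructor
  · refine ⟨fun x y => csLe x y ∨ (x = .pre a p ∧ y = .pre a q), ?_, Or.inr ⟨rfl, rfl⟩⟩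
    rintro x y (hxy | ⟨rfl, rfl⟩)
    · obtain ⟨i1, s1⟩ := isConfSim_csLe x y hxy
      exact ⟨i1, fun b y' hs hb => by
        obtain ⟨x', hsx, hx'⟩ := s1 b y' hs hb
        exact ⟨x', hsx, Or.inl hx'⟩⟩
    · refine ⟨?_, ?_⟩
      · rintro b ⟨x', hx⟩
        obtain ⟨rfl, rfl⟩ := step_pre_inv hx
        exact ⟨q, Step.pre _ q⟩
      · intro b y' hs hb
        obtain ⟨rfl, rfl⟩ := step_pre_inv hs
        exact ⟨p, Step.pre _ p, Or.inl hle⟩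
  · rintro b ⟨x', hx⟩
    obtain ⟨rfl, rfl⟩ := step_pre_inv hx
    exact ⟨p, Step.pre _ p⟩

theorem csLe_initials {p q : Proc A} (h : csLe p q) : initials p ⊆ initials q :=
  (isConfSim_csLe p q h).1

theorem csPre_addL {p q : Proc A} (r : Proc A) (h : csPre p q) :
    csPre (.add p r) (.add q r) := by
  obtain ⟨hle, hI⟩ := h
  constructor
  · refine ⟨fun x y => csLe x y ∨ (x = .add p r ∧ y = .add q r), ?_, Or.inr ⟨rfl, rfl⟩⟩
    rintro x y (hxy | ⟨rfl, rfl⟩)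
    · obtain ⟨i1, s1⟩ := isConfSim_csLe x y hxy
      exact ⟨i1, fun b y' hs hb => by
        obtain ⟨x', hsx, hx'⟩ := s1 b y' hs hb
        exact ⟨x', hsx, Or.inl hx'⟩⟩
    · refine ⟨?_, ?_⟩
      · rw [initials_add, initials_add]
        exact Set.union_subset_union_left _ (csLe_initials hle)
      · intro b y' hs hb
        rcases step_add_inv hs with hq | hr
        · have hbp : b ∈ initials p := hI ⟨y', hq⟩
          obtain ⟨_, s1⟩ := isConfSim_csLe p q hle
          obtain ⟨p', hsp, hp'⟩ := s1 b y' hq hbp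
          exact ⟨p', Step.addL r hsp, Or.inl hp'⟩
        · exact ⟨y', Step.addR p hr, Or.inl (csLe_refl y')⟩
  · rw [initials_add, initials_add]
    exact Set.union_subset_union_left _ hI

theorem csPre_addR {p q : Proc A} (r : Proc A) (h : csPre p q) :
    csPre (.add r p) (.add r q) := by
  obtain ⟨hle, hI⟩ := h
  constructor
  · refine ⟨fun x y => csLe x y ∨ (x = .add r p ∧ y = .add r q), ?_, Or.inr ⟨rfl, rfl⟩⟩
    rintro x y (hxy | ⟨rfl, rfl⟩)
    · obtain ⟨i1, s1⟩ := isConfSim_csLe x y hxy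
      exact ⟨i1, fun b y' hs hb => by
        obtain ⟨x', hsx, hx'⟩ := s1 b y' hs hb
        exact ⟨x', hsx, Or.inl hx'⟩⟩
    · refine ⟨?_, ?_⟩
      · rw [initials_add, initials_add]
        exact Set.union_subset_union_right _ (csLe_initials hle)
      · intro b y' hs hb
        rcases step_add_inv hs with hr | hq
        · exact ⟨y', Step.addL p hr, Or.inl (csLe_refl y')⟩
        · have hbp : b ∈ initials p := hI ⟨y', hq⟩
          obtain ⟨_, s1⟩ := isConfSim_csLe p q hle
          obtain ⟨p', hsp, hp'⟩ := s1 b y' hq hbp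
          exact ⟨p', Step.addR r hsp, Or.inl hp'⟩
  · rw [initials_add, initials_add]
    exact Set.union_subset_union_right _ hI

/-- The finite list of transitions of a process. -/
def succs : Proc A → List (A × Proc A)
  | .nil => []
  | .pre a p => [(a, p)]
  | .add p q => succs p ++ succs q

theorem step_iff_mem_succs {p : Proc A} {a : A} {p' : Proc A} :
    Step p a p' ↔ (a, p') ∈ succs p := by
  constructor
  · intro h
    induction h with
    | pre a p => simp [succs]
    | addL q _ ih => simp [succs, ih]
    | addR p _ ih => simp [succs, ih]
  · intro h
    induction p with
    | nil => simp [succs] at h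
    | pre b q =>
      simp [succs] at h
      obtain ⟨rfl, rfl⟩ := h
      exact Step.pre _ _
    | add p₁ p₂ ih1 ih2 =>
      simp only [succs, List.mem_append] at h
      rcases h with h | h
      · exact Step.addL p₂ (ih1 h)
      · exact Step.addR p₁ (ih2 h)

end CSAux

/-- If the action set is infinite, `⊑_CS` is the coarsest precongruence
contained in `≲_CS`: it is a preorder contained in `≲_CS`, preserved by
prefixing and by `+`, and any preorder contained in `≲_CS` that is preserved by
prefixing and by `+` is contained in `⊑_CS`. -/
theorem csPre_coarsest_precongruence {A : Type} (hA : Infinite A) :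
    (∀ p : Proc A, csPre p p) ∧
    (∀ p q r : Proc A, csPre p q → csPre q r → csPre p r) ∧
    (∀ p q : Proc A, csPre p q → csLe p q) ∧
    (∀ (a : A) (p q : Proc A), csPre p q → csPre (.pre a p) (.pre a q)) ∧
    (∀ p q r : Proc A, csPre p q → csPre (.add p r) (.add q r) ∧ csPre (.add r p) (.add r q)) ∧
    (∀ R : Proc A → Proc A → Prop,
      (∀ p, R p p) →
      (∀ p q r, R p q → R q r → R p r) →
      (∀ p q, R p q → csLe p q) →
      (∀ (a : A) (p q : Proc A), R p q → R (.pre a p) (.pre a q)) →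
      (∀ p q r : Proc A, R p q → R (.add p r) (.add q r) ∧ R (.add r p) (.add r q)) →
      ∀ p q : Proc A, R p q → csPre p q) := by
  haveI := hA
  haveI := Classical.decEq A
  refine ⟨fun p => ⟨CSAux.csLe_refl p, subset_rfl⟩,
    fun p q r h1 h2 => ⟨CSAux.csLe_trans h1.1 h2.1, h2.2.trans h1.2⟩,
    fun p q h => h.1,
    fun a p q h => CSAux.csPre_pre a h,
    fun p q r h => ⟨CSAux.csPre_addL r h, CSAux.csPre_addR r h⟩,
    ?_⟩
  intro R _ _ hsub hpreserve hadd p q hpq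
  refine ⟨hsub p q hpq, ?_⟩
  intro b hb
  by_contra hbp
  obtain ⟨q₁, hq₁⟩ := hb
  -- pick a fresh action c, not an initial of any successor of q
  obtain ⟨c, hc⟩ := Infinite.exists_notMem_finset
    (((CSAux.succs q).flatMap (fun x => (CSAux.succs x.2).map Prod.fst)).toFinset)
  set r : Proc A := .pre b (.pre c .nil) with hr
  have hR' : R (.add p r) (.add q r) := (hadd p q r hpq).1
  obtain ⟨R₀, hR₀, hrel⟩ := hsub _ _ hR'
  obtain ⟨_, s0⟩ := hR₀ _ _ hrel
  have hstepq : Step (.add q r) b q₁ := Step.addL r hq₁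
  have hbin : b ∈ initials (.add p r) := ⟨.pre c .nil, Step.addR p (Step.pre b _)⟩
  obtain ⟨p'', hsp, hrel'⟩ := s0 b q₁ hstepq hbin
  rcases CSAux.step_add_inv hsp with hp | hrstep
  · exact hbp ⟨p'', hp⟩
  · obtain ⟨-, rfl⟩ := CSAux.step_pre_inv hrstep
    have hsubI : initials (Proc.pre c Proc.nil) ⊆ initials q₁ := (hR₀ _ _ hrel').1
    have hcq : c ∈ initials q₁ := hsubI ⟨.nil, Step.pre c .nil⟩
    obtain ⟨q₂, hq₂⟩ := hcq
    apply hc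
    rw [List.mem_toFinset, List.mem_flatMap]
    refine ⟨(b, q₁), CSAux.step_iff_mem_succs.mp hq₁, ?_⟩
    simp only [List.mem_map]
    exact ⟨(c, q₂), CSAux.step_iff_mem_succs.mp hq₂, rfl⟩
end

section
/- For all closed BCCSP processes p, q, r and every action a ∈ A: if p ⊑_CS q then a.p ⊑_CS a.q, and a.p + r ⊑_CS a.q + r. -/
/-- `⊑_CS` is preserved by prefixing and by sum with a common summand. -/
theorem csPre_congruence {A : Type} (p q r : Proc A) (a : A)
    (h : csPre p q) :
    csPre (.pre a p) (.pre a q) ∧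
    csPre (.add (.pre a p) r) (.add (.pre a q) r) := by
  obtain ⟨⟨R, hR, hpq⟩, hIqp⟩ := h
  set R' : Proc A → Proc A → Prop := fun x y =>
    R x y ∨ x = y ∨ (x = .pre a p ∧ y = .pre a q) ∨
      (x = .add (.pre a p) r ∧ y = .add (.pre a q) r) with hR'def
  have hR' : IsConfSim R' := by
    rintro x y (hxy | rfl | ⟨rfl, rfl⟩ | ⟨rfl, rfl⟩)
    · obtain ⟨h1, h2⟩ := hR x y hxy
      exact ⟨h1, fun b q' hs hb => (h2 b q' hs hb).imp fun p' ⟨h3, h4⟩ => ⟨h3, Or.inl h4⟩⟩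
    · exact ⟨subset_rfl, fun b q' hs _ => ⟨q', hs, Or.inr (Or.inl rfl)⟩⟩
    · constructor
      · rintro b ⟨x', hx⟩
        cases hx
        exact ⟨q, Step.pre a q⟩
      · intro b q' hs _
        cases hs
        exact ⟨p, Step.pre a p, Or.inl hpq⟩
    · constructor
      · rintro b ⟨x', hx⟩
        cases hx with
        | addL _ hx => cases hx; exact ⟨q, Step.addL r (Step.pre a q)⟩
        | addR _ hx => exact ⟨_, Step.addR _ hx⟩
      · intro b q' hs hb
        cases hs with
        | addL _ hx => cases hx; exact ⟨p, Step.addL r (Step.pre a p), Or.inl hpq⟩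
        | addR _ hx => exact ⟨q', Step.addR _ hx, Or.inr (Or.inl rfl)⟩
  have hIpre : initials (Proc.pre a p : Proc A) = initials (.pre a q) := by
    ext b
    constructor <;> rintro ⟨x, hx⟩ <;> cases hx
    · exact ⟨q, Step.pre a q⟩
    · exact ⟨p, Step.pre a p⟩
  have hIadd : initials (Proc.add (.pre a p) r : Proc A) = initials (.add (.pre a q) r) := by
    ext b
    constructor <;> rintro ⟨x, hx⟩
    · cases hx with
      | addL _ hx => cases hx; exact ⟨q, Step.addL r (Step.pre a q)⟩
      | addR _ hx => exact ⟨_, Step.addR _ hx⟩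
    · cases hx with
      | addL _ hx => cases hx; exact ⟨p, Step.addL r (Step.pre a p)⟩
      | addR _ hx => exact ⟨_, Step.addR _ hx⟩
  constructor
  · exact ⟨⟨R', hR', Or.inr (Or.inr (Or.inl ⟨rfl, rfl⟩))⟩, hIpre.symm.subset⟩
  · exact ⟨⟨R', hR', Or.inr (Or.inr (Or.inr ⟨rfl, rfl⟩))⟩, hIadd.symm.subset⟩
end

section
/- The conformance simulation preorder ≲_CS is not preserved by +: for pairwise distinct actions a, b, c ∈ A, one has 0 ≲_CS a.b.0 and a.c.0 ≲_CS a.c.0, but not a.c.0 ≲_CS a.b.0 + a.c.0. -/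
/-- `≲_CS` is not preserved by `+`: `0 ≲_CS a.b.0` and `a.c.0 ≲_CS a.c.0`,
but not `a.c.0 ≲_CS a.b.0 + a.c.0`. -/
theorem csLe_not_preserved_by_add {A : Type} (a b c : A)
    (hab : a ≠ b) (hac : a ≠ c) (hbc : b ≠ c) :
    csLe (Proc.nil : Proc A) (.pre a (.pre b .nil)) ∧
    csLe (Proc.pre a (.pre c .nil)) (.pre a (.pre c .nil)) ∧
    ¬ csLe (Proc.pre a (.pre c .nil))
        (.add (.pre a (.pre b .nil)) (.pre a (.pre c .nil))) := by
  refine ⟨⟨fun p q => p = Proc.nil, ?_, rfl⟩, ⟨Eq, ?_, rfl⟩, ?_⟩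
  · intro p q hpq
    subst hpq
    constructor
    · rintro x ⟨p', hp'⟩; cases hp'
    · rintro x q' _ ⟨p', hp'⟩; cases hp'
  · intro p q hpq
    subst hpq
    exact ⟨subset_rfl, fun x q' hq' _ => ⟨q', hq', rfl⟩⟩
  · rintro ⟨R, hR, hpq⟩
    obtain ⟨_, h2⟩ := hR _ _ hpq
    have ha : a ∈ initials (Proc.pre a (Proc.pre c Proc.nil)) :=
      ⟨_, Step.pre a _⟩
    obtain ⟨p', hp', hRp'⟩ := h2 a (Proc.pre b Proc.nil)
      (Step.addL _ (Step.pre a _)) ha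
    cases hp'
    obtain ⟨h1, _⟩ := hR _ _ hRp'
    have : c ∈ initials (Proc.pre b Proc.nil) := h1 ⟨_, Step.pre c _⟩
    obtain ⟨q', hq'⟩ := this
    cases hq'
    exact hbc rfl
end

section
/- The conformance axioms are sound for the conformance precongruence: for all closed BCCSP processes p, q and every action a ∈ A, if I(p) ∩ I(q) = ∅ then a.p ⊑_CS a.(p + q), and (unconditionally) a.p + a.q ⊑_CS a.p. -/

lemma initials_pre {A : Type} (a : A) (p : Proc A) :
    initials (Proc.pre a p) = {a} := by
  ext b
  constructor
  · rintro ⟨p', h⟩; cases h; rfl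
  · rintro rfl; exact ⟨_, Step.pre _ _⟩

lemma step_pre_inv {A : Type} {a b : A} {p p' : Proc A}
    (h : Step (Proc.pre a p) b p') : b = a ∧ p' = p := by
  cases h; exact ⟨rfl, rfl⟩

/-- Soundness of the conformance axioms for `⊑_CS`: if `I(p) ∩ I(q) = ∅` then
`a.p ⊑_CS a.(p + q)`, and unconditionally `a.p + a.q ⊑_CS a.p`. -/
theorem cs_axioms_sound {A : Type} (a : A) (p q : Proc A) :
    (initials p ∩ initials q = ∅ → csPre (Proc.pre a p) (.pre a (.add p q))) ∧
    csPre (Proc.add (.pre a p) (.pre a q)) (.pre a p) := by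
  constructor
  · intro hdisj
    refine ⟨⟨fun x y => x = y ∨ (x = Proc.pre a p ∧ y = Proc.pre a (Proc.add p q)) ∨
        (x = p ∧ y = Proc.add p q), ?_, Or.inr (Or.inl ⟨rfl, rfl⟩)⟩, ?_⟩
    · rintro x y (rfl | ⟨rfl, rfl⟩ | ⟨rfl, rfl⟩)
      · exact ⟨subset_rfl, fun b y' hs _ => ⟨y', hs, Or.inl rfl⟩⟩
      · constructor
        · rw [initials_pre, initials_pre]
        · intro b y' hs hb
          obtain ⟨rfl, rfl⟩ := step_pre_inv hs
          exact ⟨_, Step.pre _ _, Or.inr (Or.inr ⟨rfl, rfl⟩)⟩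
      · constructor
        · intro b ⟨p', hp'⟩; exact ⟨p', Step.addL q hp'⟩
        · intro b y' hs hb
          cases hs with
          | addL _ h => exact ⟨y', h, Or.inl rfl⟩
          | addR _ h =>
              rw [Set.eq_empty_iff_forall_notMem] at hdisj
              exact absurd ⟨hb, _, h⟩ (hdisj b)
    · rw [initials_pre, initials_pre]
  · refine ⟨⟨fun x y => x = y ∨ (x = Proc.add (.pre a p) (.pre a q) ∧ y = Proc.pre a p),
        ?_, Or.inr ⟨rfl, rfl⟩⟩, ?_⟩
    · rintro x y (rfl | ⟨rfl, rfl⟩)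
      · exact ⟨subset_rfl, fun b y' hs _ => ⟨y', hs, Or.inl rfl⟩⟩
      · constructor
        · intro b ⟨p', hp'⟩
          rw [initials_pre]
          cases hp' with
          | addL _ h => exact (step_pre_inv h).1
          | addR _ h => exact (step_pre_inv h).1
        · intro b y' hs hb
          obtain ⟨rfl, rfl⟩ := step_pre_inv hs
          exact ⟨_, Step.addL _ (Step.pre _ _), Or.inl rfl⟩
    · rw [initials_pre]
      intro b hb
      subst hb
      exact ⟨_, Step.addL _ (Step.pre _ _)⟩
end

section
/- Let A be an action set with partition {A^r, A^l, A^bi}. For every open BCCSP term x, all actions a, and all terms p_r that are finite sums of terms of the form b.t with b ∈ A^r and all terms p_l that are finite sums of terms of the form b'.t with b' ∈ A^l: if a ∈ A^r, then the equation a.(x + p_r) = a.(x + p_r) + a.(x + p_l) is equationally derivable from B1–B4 together with the schemas (S1): a.(x + b.y) = a.(x + b.y) + a.x (a, b ∈ A^r) and (S2): a.x = a.x + a.(x + b'.y) (a ∈ A^r, b' ∈ A^l); and if a ∈ A^l, then a.(x + p_l) = a.(x + p_l) + a.(x + p_r) is equationally derivable from B1–B4 together with the schemas (S3): a.x = a.x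 + a.(x + b.y) (a ∈ A^l, b ∈ A^r) and (S4): a.(x + b'.y) = a.(x + b'.y) + a.x (a, b' ∈ A^l). -/
/-- Schema (S1): `a.(x + b.y) = a.(x + b.y) + a.x` for `a, b ∈ A^r`. -/
def S1Eqns {A : Type} (Ar : Set A) : Set (Term A × Term A) :=
  { e | ∃ a ∈ Ar, ∃ b ∈ Ar,
      e = (.pre a (.add (.var 0) (.pre b (.var 1))),
           .add (.pre a (.add (.var 0) (.pre b (.var 1)))) (.pre a (.var 0))) }

/-- Schema (S2): `a.x = a.x + a.(x + b'.y)` for `a ∈ A^r`, `b' ∈ A^l`. -/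
def S2Eqns {A : Type} (Ar Al : Set A) : Set (Term A × Term A) :=
  { e | ∃ a ∈ Ar, ∃ b ∈ Al,
      e = (.pre a (.var 0),
           .add (.pre a (.var 0)) (.pre a (.add (.var 0) (.pre b (.var 1))))) }

/-- Schema (S3): `a'.x = a'.x + a'.(x + b.y)` for `a' ∈ A^l`, `b ∈ A^r`. -/
def S3Eqns {A : Type} (Ar Al : Set A) : Set (Term A × Term A) :=
  { e | ∃ a ∈ Al, ∃ b ∈ Ar,
      e = (.pre a (.var 0),
           .add (.pre a (.var 0)) (.pre a (.add (.var 0) (.pre b (.var 1))))) }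

/-- Schema (S4): `a'.(x + b'.y) = a'.(x + b'.y) + a'.x` for `a', b' ∈ A^l`. -/
def S4Eqns {A : Type} (Al : Set A) : Set (Term A × Term A) :=
  { e | ∃ a ∈ Al, ∃ b ∈ Al,
      e = (.pre a (.add (.var 0) (.pre b (.var 1))),
           .add (.pre a (.add (.var 0) (.pre b (.var 1)))) (.pre a (.var 0))) }

/-- The axiom set `A_CC^≡`: B1–B4 together with the schemas S1–S4. -/
def ACCEq {A : Type} (Ar Al : Set A) : Set (Term A × Term A) :=
  BEqns A ∪ S1Eqns Ar ∪ S2Eqns Ar Al ∪ S3Eqns Ar Al ∪ S4Eqns Al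

/-- `SumOfPre B t` states that `t` is a finite sum of terms of the form `b.t'`
with `b ∈ B` (the empty sum being `0`). -/
inductive SumOfPre {A : Type} (B : Set A) : Term A → Prop
  | nil : SumOfPre B .nil
  | pre {b : A} (t : Term A) : b ∈ B → SumOfPre B (.pre b t)
  | add {s t : Term A} : SumOfPre B s → SumOfPre B t → SumOfPre B (.add s t)

section CCAux

variable {A : Type} {E : Set (Term A × Term A)}

lemma tde_b2 (hB : BEqns A ⊆ E) (s t u : Term A) :
    TDerivEq E (.add (.add s t) u) (.add s (.add t u)) := by
  have h := TDerivEq.ax (E := E) (.add (.add (.var 0) (.var 1)) (.var 2))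
    (.add (.var 0) (.add (.var 1) (.var 2)))
    (fun n => if n = 0 then s else if n = 1 then t else u)
    (hB (by simp [BEqns]))
  simpa [Term.substT] using h

lemma tde_b3 (hB : BEqns A ⊆ E) (s : Term A) :
    TDerivEq E (.add s s) s := by
  have h := TDerivEq.ax (E := E) (.add (.var 0) (.var 0)) (.var 0)
    (fun _ => s) (hB (by simp [BEqns]))
  simpa [Term.substT] using h

lemma tde_b4 (hB : BEqns A ⊆ E) (s : Term A) :
    TDerivEq E (.add s .nil) s := by
  have h := TDerivEq.ax (E := E) (.add (.var 0) .nil) (.var 0)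
    (fun _ => s) (hB (by simp [BEqns]))
  simpa [Term.substT] using h

/-- Absorption from an S1/S4-style schema: `a.(x + p) = a.(x + p) + a.x`. -/
lemma tde_abs_r (hB : BEqns A ⊆ E) (a : A) {B : Set A}
    (hS : ∀ b ∈ B, ∀ u v : Term A,
      TDerivEq E (.pre a (.add u (.pre b v)))
        (.add (.pre a (.add u (.pre b v))) (.pre a u)))
    {p : Term A} (hp : SumOfPre B p) :
    ∀ x : Term A, TDerivEq E (.pre a (.add x p))
      (.add (.pre a (.add x p)) (.pre a x)) := by
  induction hp with
  | nil =>
    intro x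
    have h1 : TDerivEq E (.pre a (.add x .nil)) (.pre a x) :=
      .pre a (tde_b4 hB x)
    exact h1.trans (((tde_b3 hB (.pre a x)).symm).trans (.add h1.symm (.refl _)))
  | pre t hb => intro x; exact hS _ hb x t
  | add hs ht IHs IHt =>
    rename_i s t
    intro x
    have h : TDerivEq E (.pre a (.add x (.add s t)))
        (.add (.pre a (.add x (.add s t))) (.pre a (.add x s))) :=
      ((TDerivEq.pre a (tde_b2 hB x s t).symm).trans (IHt (.add x s))).trans
        (.add (.pre a (tde_b2 hB x s t)) (.refl _))
    exact (h.trans (.add (.refl _) (IHs x))).trans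
      (((tde_b2 hB _ _ _).symm).trans (.add h.symm (.refl _)))

/-- Absorption from an S2/S3-style schema: `a.x = a.x + a.(x + p)`. -/
lemma tde_abs_l (hB : BEqns A ⊆ E) (a : A) {B : Set A}
    (hS : ∀ b ∈ B, ∀ u v : Term A,
      TDerivEq E (.pre a u)
        (.add (.pre a u) (.pre a (.add u (.pre b v)))))
    {p : Term A} (hp : SumOfPre B p) :
    ∀ x : Term A, TDerivEq E (.pre a x)
      (.add (.pre a x) (.pre a (.add x p))) := by
  induction hp with
  | nil =>
    intro x
    exact ((tde_b3 hB (.pre a x)).symm).trans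
      (.add (.refl _) (TDerivEq.pre a (tde_b4 hB x)).symm)
  | pre t hb => intro x; exact hS _ hb x t
  | add hs ht IHs IHt =>
    rename_i s t
    intro x
    have h1 := IHs x
    have h2 := IHt (.add x s)
    exact (((h1.trans (.add (.refl _) h2)).trans
        ((tde_b2 hB _ _ _).symm)).trans (.add h1.symm (.refl _))).trans
      (.add (.refl _) (TDerivEq.pre a (tde_b2 hB x s t)))

end CCAux

/-- The derived equations (DS1) and (DS2): for any open term `x`, any sum `p_r`
of `A^r`-prefixed terms and any sum `p_l` of `A^l`-prefixed terms,
`a.(x + p_r) = a.(x + p_r) + a.(x + p_l)` is derivable from B1–B4, S1, S2 when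
`a ∈ A^r`, and `a.(x + p_l) = a.(x + p_l) + a.(x + p_r)` is derivable from
B1–B4, S3, S4 when `a ∈ A^l`. -/
theorem cc_derived_axioms {A : Type} (Ar Al Abi : Set A)
    (hpart : IsPartition Ar Al Abi)
    (x : Term A) (a : A) (pr pl : Term A)
    (hpr : SumOfPre Ar pr) (hpl : SumOfPre Al pl) :
    (a ∈ Ar → TDerivEq (BEqns A ∪ S1Eqns Ar ∪ S2Eqns Ar Al)
        (.pre a (.add x pr))
        (.add (.pre a (.add x pr)) (.pre a (.add x pl)))) ∧
    (a ∈ Al → TDerivEq (BEqns A ∪ S3Eqns Ar Al ∪ S4Eqns Al)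
        (.pre a (.add x pl))
        (.add (.pre a (.add x pl)) (.pre a (.add x pr)))) := by
  constructor
  · intro ha
    set E := BEqns A ∪ S1Eqns Ar ∪ S2Eqns Ar Al with hE
    have hB : BEqns A ⊆ E := fun e he => Or.inl (Or.inl he)
    have hS1 : ∀ b ∈ Ar, ∀ u v : Term A,
        TDerivEq E (.pre a (.add u (.pre b v)))
          (.add (.pre a (.add u (.pre b v))) (.pre a u)) := by
      intro b hb u v
      have h := TDerivEq.ax (E := E)
        (.pre a (.add (.var 0) (.pre b (.var 1))))
        (.add (.pre a (.add (.var 0) (.pre b (.var 1)))) (.pre a (.var 0)))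
        (fun n => if n = 0 then u else v)
        (Or.inl (Or.inr ⟨a, ha, b, hb, rfl⟩))
      simpa [Term.substT] using h
    have hS2 : ∀ b ∈ Al, ∀ u v : Term A,
        TDerivEq E (.pre a u)
          (.add (.pre a u) (.pre a (.add u (.pre b v)))) := by
      intro b hb u v
      have h := TDerivEq.ax (E := E)
        (.pre a (.var 0))
        (.add (.pre a (.var 0)) (.pre a (.add (.var 0) (.pre b (.var 1)))))
        (fun n => if n = 0 then u else v)
        (Or.inr ⟨a, ha, b, hb, rfl⟩)
      simpa [Term.substT] using h
    have hr := tde_abs_r hB a hS1 hpr x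
    have hl := tde_abs_l hB a hS2 hpl x
    exact (hr.trans (.add (.refl _) hl)).trans
      (((tde_b2 hB _ _ _).symm).trans (.add hr.symm (.refl _)))
  · intro ha
    set E := BEqns A ∪ S3Eqns Ar Al ∪ S4Eqns Al with hE
    have hB : BEqns A ⊆ E := fun e he => Or.inl (Or.inl he)
    have hS4 : ∀ b ∈ Al, ∀ u v : Term A,
        TDerivEq E (.pre a (.add u (.pre b v)))
          (.add (.pre a (.add u (.pre b v))) (.pre a u)) := by
      intro b hb u v
      have h := TDerivEq.ax (E := E)
        (.pre a (.add (.var 0) (.pre b (.var 1))))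
        (.add (.pre a (.add (.var 0) (.pre b (.var 1)))) (.pre a (.var 0)))
        (fun n => if n = 0 then u else v)
        (Or.inr ⟨a, ha, b, hb, rfl⟩)
      simpa [Term.substT] using h
    have hS3 : ∀ b ∈ Ar, ∀ u v : Term A,
        TDerivEq E (.pre a u)
          (.add (.pre a u) (.pre a (.add u (.pre b v)))) := by
      intro b hb u v
      have h := TDerivEq.ax (E := E)
        (.pre a (.var 0))
        (.add (.pre a (.var 0)) (.pre a (.add (.var 0) (.pre b (.var 1)))))
        (fun n => if n = 0 then u else v)
        (Or.inl (Or.inr ⟨a, ha, b, hb, rfl⟩))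
      simpa [Term.substT] using h
    have hr := tde_abs_r hB a hS4 hpl x
    have hl := tde_abs_l hB a hS3 hpr x
    exact (hr.trans (.add (.refl _) hl)).trans
      (((tde_b2 hB _ _ _).symm).trans (.add hr.symm (.refl _)))
end

section
/- Let A be an action set with partition {A^r, A^l, A^bi} where A^bi = ∅. If p and q are closed BCCSP processes with p ≲_CC q, then for every closed process r, every a ∈ A^r and every a' ∈ A^l, the equations a.(q + r) = a.(q + r) + a.(p + r) and a'.(p + r) = a'.(p + r) + a'.(q + r) are equationally derivable from the axiom set A_CC^≡. -/
namespace CCAux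

variable {A : Type}

/-- Size of a process. -/
def psize : Proc A → ℕ
  | .nil => 0
  | .pre _ p => psize p + 1
  | .add p q => psize p + psize q

lemma step_size {p : Proc A} {a : A} {p' : Proc A} (h : Step p a p') :
    psize p' < psize p := by
  induction h with
  | pre => simp [psize]
  | addL q _ ih => simp [psize]; omega
  | addR p _ ih => simp [psize]; omega

/-- Derivable absorption: `u = u + v`. -/
def Abs (E : Set (Term A × Term A)) (u v : Proc A) : Prop :=
  DerivEq E u (.add u v)

section Basic

variable {E : Set (Term A × Term A)}

lemma dcomm (hB : BEqns A ⊆ E) (p q : Proc A) : DerivEq E (.add p q) (.add q p) := by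
  have h := DerivEq.ax (E := E) (.add (.var 0) (.var 1)) (.add (.var 1) (.var 0))
    (fun n => if n = 0 then p else q) (hB (by simp [BEqns]))
  simpa [Term.subst] using h

lemma dassoc (hB : BEqns A ⊆ E) (p q r : Proc A) :
    DerivEq E (.add (.add p q) r) (.add p (.add q r)) := by
  have h := DerivEq.ax (E := E)
    (.add (.add (.var 0) (.var 1)) (.var 2)) (.add (.var 0) (.add (.var 1) (.var 2)))
    (fun n => if n = 0 then p else if n = 1 then q else r) (hB (by simp [BEqns]))
  simpa [Term.subst] using h

lemma didem (hB : BEqns A ⊆ E) (p : Proc A) : DerivEq E (.add p p) p := by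
  have h := DerivEq.ax (E := E) (.add (.var 0) (.var 0)) (.var 0)
    (fun _ => p) (hB (by simp [BEqns]))
  simpa [Term.subst] using h

lemma dnil (hB : BEqns A ⊆ E) (p : Proc A) : DerivEq E (.add p .nil) p := by
  have h := DerivEq.ax (E := E) (.add (.var 0) .nil) (.var 0)
    (fun _ => p) (hB (by simp [BEqns]))
  simpa [Term.subst] using h

lemma abs_of_eq (hB : BEqns A ⊆ E) {u v : Proc A} (h : DerivEq E u v) : Abs E u v :=
  DerivEq.trans (DerivEq.symm (didem hB u)) (DerivEq.add (DerivEq.refl u) h)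

lemma abs_refl (hB : BEqns A ⊆ E) (u : Proc A) : Abs E u u := abs_of_eq hB (DerivEq.refl u)

lemma abs_congr {u u' v v' : Proc A} (hu : DerivEq E u u') (hv : DerivEq E v v')
    (h : Abs E u v) : Abs E u' v' :=
  DerivEq.trans (DerivEq.symm hu) (DerivEq.trans h (DerivEq.add hu hv))

lemma abs_trans (hB : BEqns A ⊆ E) {u v w : Proc A} (h1 : Abs E u v) (h2 : Abs E v w) : Abs E u w :=
  DerivEq.trans h1 <| DerivEq.trans (DerivEq.add (DerivEq.refl u) h2) <|
    DerivEq.trans (DerivEq.symm (dassoc hB u v w))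
      (DerivEq.add (DerivEq.symm h1) (DerivEq.refl w))

lemma abs_addl (hB : BEqns A ⊆ E) (u v : Proc A) : Abs E (.add u v) u := by
  refine DerivEq.symm ?_
  exact DerivEq.trans (dassoc hB u v u) <|
    DerivEq.trans (DerivEq.add (DerivEq.refl u) (dcomm hB v u)) <|
    DerivEq.trans (DerivEq.symm (dassoc hB u u v))
      (DerivEq.add (didem hB u) (DerivEq.refl v))

lemma abs_addr (hB : BEqns A ⊆ E) (u v : Proc A) : Abs E (.add u v) v :=
  abs_congr (dcomm hB v u) (DerivEq.refl v) (abs_addl hB v u)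

lemma abs_summand (hB : BEqns A ⊆ E) {p : Proc A} {a : A} {p' : Proc A} (h : Step p a p') :
    Abs E p (.pre a p') := by
  induction h with
  | pre a p => exact abs_refl hB _
  | addL q _ ih => exact abs_trans hB (abs_addl hB _ _) ih
  | addR p _ ih => exact abs_trans hB (abs_addr hB _ _) ih

end Basic

section Axioms

variable {Ar Al : Set A}

lemma B_sub : BEqns A ⊆ ACCEq Ar Al :=
  fun _ hx => Or.inl (Or.inl (Or.inl (Or.inl hx)))

lemma absS1 {a b : A} (ha : a ∈ Ar) (hb : b ∈ Ar) (x y : Proc A) :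
    Abs (ACCEq Ar Al) (.pre a (.add x (.pre b y))) (.pre a x) := by
  have hm : ((.pre a (.add (.var 0) (.pre b (.var 1))) : Term A),
      (.add (.pre a (.add (.var 0) (.pre b (.var 1)))) (.pre a (.var 0)) : Term A))
      ∈ ACCEq Ar Al := Or.inl (Or.inl (Or.inl (Or.inr ⟨a, ha, b, hb, rfl⟩)))
  have h := DerivEq.ax _ _ (fun n => if n = 0 then x else y) hm
  simpa [Abs, Term.subst] using h

lemma absS2 {a b : A} (ha : a ∈ Ar) (hb : b ∈ Al) (x y : Proc A) :
    Abs (ACCEq Ar Al) (.pre a x) (.pre a (.add x (.pre b y))) := by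
  have hm : ((.pre a (.var 0) : Term A),
      (.add (.pre a (.var 0)) (.pre a (.add (.var 0) (.pre b (.var 1)))) : Term A))
      ∈ ACCEq Ar Al := Or.inl (Or.inl (Or.inr ⟨a, ha, b, hb, rfl⟩))
  have h := DerivEq.ax _ _ (fun n => if n = 0 then x else y) hm
  simpa [Abs, Term.subst] using h

lemma absS3 {a b : A} (ha : a ∈ Al) (hb : b ∈ Ar) (x y : Proc A) :
    Abs (ACCEq Ar Al) (.pre a x) (.pre a (.add x (.pre b y))) := by
  have hm : ((.pre a (.var 0) : Term A),
      (.add (.pre a (.var 0)) (.pre a (.add (.var 0) (.pre b (.var 1)))) : Term A))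
      ∈ ACCEq Ar Al := Or.inl (Or.inr ⟨a, ha, b, hb, rfl⟩)
  have h := DerivEq.ax _ _ (fun n => if n = 0 then x else y) hm
  simpa [Abs, Term.subst] using h

lemma absS4 {a b : A} (ha : a ∈ Al) (hb : b ∈ Al) (x y : Proc A) :
    Abs (ACCEq Ar Al) (.pre a (.add x (.pre b y))) (.pre a x) := by
  have hm : ((.pre a (.add (.var 0) (.pre b (.var 1))) : Term A),
      (.add (.pre a (.add (.var 0) (.pre b (.var 1)))) (.pre a (.var 0)) : Term A))
      ∈ ACCEq Ar Al := Or.inr ⟨a, ha, b, hb, rfl⟩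
  have h := DerivEq.ax _ _ (fun n => if n = 0 then x else y) hm
  simpa [Abs, Term.subst] using h

end Axioms

section Aux

variable {Ar Al : Set A}

/-- Insert summands under a covariant prefix: `Al`-summands via S2,
`Ar`-summands by absorption into `x`. -/
lemma aux1 (htot : ∀ b : A, b ∈ Ar ∨ b ∈ Al) {a : A} (ha : a ∈ Ar)
    (p0 : Proc A) :
    ∀ x : Proc A,
      (∀ b p', Step p0 b p' → b ∈ Ar → Abs (ACCEq Ar Al) x (.pre b p')) →
      Abs (ACCEq Ar Al) (.pre a x) (.pre a (.add x p0)) := by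
  have hB : BEqns A ⊆ ACCEq Ar Al := B_sub
  induction p0 with
  | nil =>
    intro x _
    exact abs_congr (DerivEq.refl _) (DerivEq.pre a (DerivEq.symm (dnil hB x)))
      (abs_refl hB _)
  | pre b p' =>
    intro x hx
    rcases htot b with hbr | hbl
    · exact abs_of_eq hB (DerivEq.pre a (hx b p' (Step.pre b p') hbr))
    · exact absS2 ha hbl x p'
  | add p1 p2 ih1 ih2 =>
    intro x hx
    have h1 := ih1 x (fun b p' hs => hx b p' (Step.addL p2 hs))
    have h2 := ih2 (.add x p1)
      (fun b p' hs hbr => abs_trans hB (abs_addl hB x p1) (hx b p' (Step.addR p1 hs) hbr))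
    exact abs_congr (DerivEq.refl _) (DerivEq.pre a (dassoc hB x p1 p2))
      (abs_trans hB h1 h2)

/-- Insert summands under a contravariant prefix: `Ar`-summands via S3,
`Al`-summands by absorption into `x`. -/
lemma aux1' (htot : ∀ b : A, b ∈ Ar ∨ b ∈ Al) {a : A} (ha : a ∈ Al)
    (q0 : Proc A) :
    ∀ x : Proc A,
      (∀ c q', Step q0 c q' → c ∈ Al → Abs (ACCEq Ar Al) x (.pre c q')) →
      Abs (ACCEq Ar Al) (.pre a x) (.pre a (.add x q0)) := by
  have hB : BEqns A ⊆ ACCEq Ar Al := B_sub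
  induction q0 with
  | nil =>
    intro x _
    exact abs_congr (DerivEq.refl _) (DerivEq.pre a (DerivEq.symm (dnil hB x)))
      (abs_refl hB _)
  | pre c q' =>
    intro x hx
    rcases htot c with hcr | hcl
    · exact absS3 ha hcr x q'
    · exact abs_of_eq hB (DerivEq.pre a (hx c q' (Step.pre c q') hcl))
  | add q1 q2 ih1 ih2 =>
    intro x hx
    have h1 := ih1 x (fun c q' hs => hx c q' (Step.addL q2 hs))
    have h2 := ih2 (.add x q1)
      (fun c q' hs hcl => abs_trans hB (abs_addl hB x q1) (hx c q' (Step.addR q1 hs) hcl))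
    exact abs_congr (DerivEq.refl _) (DerivEq.pre a (dassoc hB x q1 q2))
      (abs_trans hB h1 h2)

/-- Drop summands under a covariant prefix: `Ar`-summands via S1,
`Al`-summands by absorption into `x`. -/
lemma aux2 (htot : ∀ b : A, b ∈ Ar ∨ b ∈ Al) {a : A} (ha : a ∈ Ar)
    (q0 : Proc A) :
    ∀ x : Proc A,
      (∀ c q', Step q0 c q' → c ∈ Al → Abs (ACCEq Ar Al) x (.pre c q')) →
      Abs (ACCEq Ar Al) (.pre a (.add x q0)) (.pre a x) := by
  have hB : BEqns A ⊆ ACCEq Ar Al := B_sub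
  induction q0 with
  | nil =>
    intro x _
    exact abs_congr (DerivEq.pre a (DerivEq.symm (dnil hB x))) (DerivEq.refl _)
      (abs_refl hB _)
  | pre c q' =>
    intro x hx
    rcases htot c with hcr | hcl
    · exact absS1 ha hcr x q'
    · exact abs_of_eq hB (DerivEq.pre a (DerivEq.symm (hx c q' (Step.pre c q') hcl)))
  | add q1 q2 ih1 ih2 =>
    intro x hx
    have h2 := ih2 x (fun c q' hs => hx c q' (Step.addR q1 hs))
    have h1 := ih1 (.add x q2)
      (fun c q' hs hcl => abs_trans hB (abs_addl hB x q2) (hx c q' (Step.addL q2 hs) hcl))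
    have hre : DerivEq (ACCEq Ar Al) (Proc.add (.add x q2) q1) (.add x (.add q1 q2)) :=
      DerivEq.trans (dassoc hB x q2 q1) (DerivEq.add (DerivEq.refl x) (dcomm hB q2 q1))
    exact abs_congr (DerivEq.pre a hre) (DerivEq.refl _) (abs_trans hB h1 h2)

/-- Drop summands under a contravariant prefix: `Al`-summands via S4,
`Ar`-summands by absorption into `x`. -/
lemma aux2' (htot : ∀ b : A, b ∈ Ar ∨ b ∈ Al) {a : A} (ha : a ∈ Al)
    (p0 : Proc A) :
    ∀ x : Proc A,
      (∀ b p', Step p0 b p' → b ∈ Ar → Abs (ACCEq Ar Al) x (.pre b p')) →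
      Abs (ACCEq Ar Al) (.pre a (.add x p0)) (.pre a x) := by
  have hB : BEqns A ⊆ ACCEq Ar Al := B_sub
  induction p0 with
  | nil =>
    intro x _
    exact abs_congr (DerivEq.pre a (DerivEq.symm (dnil hB x))) (DerivEq.refl _)
      (abs_refl hB _)
  | pre b p' =>
    intro x hx
    rcases htot b with hbr | hbl
    · exact abs_of_eq hB (DerivEq.pre a (DerivEq.symm (hx b p' (Step.pre b p') hbr)))
    · exact absS4 ha hbl x p'
  | add p1 p2 ih1 ih2 =>
    intro x hx
    have h2 := ih2 x (fun b p' hs => hx b p' (Step.addR p1 hs))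
    have h1 := ih1 (.add x p2)
      (fun b p' hs hbr => abs_trans hB (abs_addl hB x p2) (hx b p' (Step.addL p2 hs) hbr))
    have hre : DerivEq (ACCEq Ar Al) (Proc.add (.add x p2) p1) (.add x (.add p1 p2)) :=
      DerivEq.trans (dassoc hB x p2 p1) (DerivEq.add (DerivEq.refl x) (dcomm hB p2 p1))
    exact abs_congr (DerivEq.pre a hre) (DerivEq.refl _) (abs_trans hB h1 h2)

end Aux

lemma mainlem (Ar Al : Set A) (htot : ∀ b : A, b ∈ Ar ∨ b ∈ Al) :
    ∀ n : ℕ, ∀ p q : Proc A, psize p + psize q ≤ n →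
      ccLe Ar Al ∅ p q → ∀ r : Proc A,
      (∀ a ∈ Ar, Abs (ACCEq Ar Al) (.pre a (.add q r)) (.pre a (.add p r))) ∧
      (∀ a ∈ Al, Abs (ACCEq Ar Al) (.pre a (.add p r)) (.pre a (.add q r))) := by
  have hB : BEqns A ⊆ ACCEq Ar Al := B_sub
  intro n
  induction n using Nat.strong_induction_on with
  | _ n IH =>
    rintro p q hsz ⟨S, hS, hpq⟩ r
    -- matched covariant summands
    have hF : ∀ b p', b ∈ Ar → Step p b p' →
        ∃ q', Step q b q' ∧ Abs (ACCEq Ar Al) (.pre b q') (.pre b p') := by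
      intro b p' hb hstep
      obtain ⟨q', hq', hS'⟩ := (hS p q hpq).1 b (Set.mem_union_left _ hb) p' hstep
      have hlt : psize p' + psize q' < n := by
        have h1 := step_size hstep
        have h2 := step_size hq'
        omega
      have h := (IH _ hlt p' q' le_rfl ⟨S, hS, hS'⟩ Proc.nil).1 b hb
      exact ⟨q', hq', abs_congr (DerivEq.pre b (dnil hB q')) (DerivEq.pre b (dnil hB p')) h⟩
    -- matched contravariant summands
    have hG : ∀ c q', c ∈ Al → Step q c q' →
        ∃ p'', Step p c p'' ∧ Abs (ACCEq Ar Al) (.pre c p'') (.pre c q') := by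
      intro c q' hc hstep
      obtain ⟨p'', hp'', hS'⟩ := (hS p q hpq).2 c (Set.mem_union_left _ hc) q' hstep
      have hlt : psize p'' + psize q' < n := by
        have h1 := step_size hstep
        have h2 := step_size hp''
        omega
      have h := (IH _ hlt p'' q' le_rfl ⟨S, hS, hS'⟩ Proc.nil).2 c hc
      exact ⟨p'', hp'', abs_congr (DerivEq.pre c (dnil hB p'')) (DerivEq.pre c (dnil hB q')) h⟩
    have hQR : ∀ b p', Step p b p' → b ∈ Ar →
        Abs (ACCEq Ar Al) (.add q r) (.pre b p') := by
      intro b p' hs hb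
      obtain ⟨q', hq', habs⟩ := hF b p' hb hs
      exact abs_trans hB (abs_trans hB (abs_addl hB q r) (abs_summand hB hq')) habs
    have hPR : ∀ c q', Step q c q' → c ∈ Al →
        Abs (ACCEq Ar Al) (.add p r) (.pre c q') := by
      intro c q' hs hc
      obtain ⟨p'', hp'', habs⟩ := hG c q' hc hs
      exact abs_trans hB (abs_trans hB (abs_addl hB p r) (abs_summand hB hp'')) habs
    -- rearrangement (q+r)+p = (p+r)+q
    have hre : DerivEq (ACCEq Ar Al) (Proc.add (.add q r) p) (.add (.add p r) q) :=
      DerivEq.trans (dassoc hB q r p) <|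
        DerivEq.trans (dcomm hB q (.add r p)) <|
        DerivEq.add (dcomm hB r p) (DerivEq.refl q)
    constructor
    · intro a ha
      have h1 := aux1 htot ha p (.add q r) hQR
      have h2 := aux2 htot ha q (.add p r) hPR
      exact abs_trans hB
        (abs_congr (DerivEq.refl _) (DerivEq.pre a hre) h1) h2
    · intro a ha
      have h1 := aux1' htot ha q (.add p r) hPR
      have h2 := aux2' htot ha p (.add q r) hQR
      refine abs_trans hB ?_ h2
      refine abs_congr (DerivEq.refl _) (DerivEq.pre a (DerivEq.symm hre)) h1
  
end CCAux

/-- If `A^bi = ∅` and `p ≲_CC q`, then for every process `r`, every `a ∈ A^r`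
and every `a' ∈ A^l`, the equations `a.(q + r) = a.(q + r) + a.(p + r)` and
`a'.(p + r) = a'.(p + r) + a'.(q + r)` are derivable from `A_CC^≡`. -/
theorem cc_le_derivable {A : Type} (Ar Al Abi : Set A)
    (hpart : IsPartition Ar Al Abi) (hbi : Abi = ∅)
    (p q : Proc A) (hpq : ccLe Ar Al Abi p q) :
    ∀ r : Proc A, ∀ a ∈ Ar, ∀ a' ∈ Al,
      DerivEq (ACCEq Ar Al) (.pre a (.add q r))
        (.add (.pre a (.add q r)) (.pre a (.add p r))) ∧
      DerivEq (ACCEq Ar Al) (.pre a' (.add p r))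
        (.add (.pre a' (.add p r)) (.pre a' (.add q r))) := by
  subst hbi
  have htot : ∀ b : A, b ∈ Ar ∨ b ∈ Al := by
    intro b
    have hb : b ∈ Ar ∪ Al ∪ (∅ : Set A) := hpart.1 ▸ Set.mem_univ b
    simpa using hb
  intro r a ha a' ha'
  obtain ⟨h1, h2⟩ := CCAux.mainlem Ar Al htot (CCAux.psize p + CCAux.psize q) p q le_rfl hpq r
  exact ⟨h1 a ha, h2 a' ha'⟩
end
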